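/- Every strictly semi-positive tensor is a Q-tensor; in particular every P-tensor is a Q-tensor. -/

import Mathlib

open Finset

/-- The $i$-th component of $\mathcal{A}x^{m-1}$ for an order-$(m+2)$, dimension-$n$ tensor. -/
def Axm1 {m n : ℕ} (A : (Fin (m + 2) → Fin n) → ℝ) (x : Fin n → ℝ) (i : Fin n) : ℝ :=
  ∑ f : Fin (m + 1) → Fin n, A (Fin.cons i f) * ∏ j, x (f j)

/-- The homogeneous form $\mathcal{A}x^{m}$. -/
def Axm {m n : ℕ} (A : (Fin (m + 2) → Fin n) → ℝ) (x : Fin n → ℝ) : ℝ :=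
  ∑ f : Fin (m + 2) → Fin n, A f * ∏ j, x (f j)

/-- `x` solves the tensor complementarity problem $(q, \mathcal{A})$. -/
def IsTCPSol {m n : ℕ} (A : (Fin (m + 2) → Fin n) → ℝ) (q x : Fin n → ℝ) : Prop :=
  (∀ i, 0 ≤ x i) ∧ (∀ i, 0 ≤ q i + Axm1 A x i) ∧ ∑ i, x i * (q i + Axm1 A x i) = 0

/-- Q-tensor: the TCP $(q,\mathcal{A})$ has a solution for every $q$. -/
def QTensor {m n : ℕ} (A : (Fin (m + 2) → Fin n) → ℝ) : Prop :=
  ∀ q : Fin n → ℝ, ∃ x : Fin n → ℝ, IsTCPSol A q x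

/-- R-tensor. -/
def RTensor {m n : ℕ} (A : (Fin (m + 2) → Fin n) → ℝ) : Prop :=
  ¬ ∃ (x : Fin n → ℝ) (t : ℝ), (∀ i, 0 ≤ x i) ∧ x ≠ 0 ∧ 0 ≤ t ∧
      (∀ i, 0 < x i → Axm1 A x i + t = 0) ∧ (∀ j, x j = 0 → 0 ≤ Axm1 A x j + t)

/-- R₀-tensor. -/
def R0Tensor {m n : ℕ} (A : (Fin (m + 2) → Fin n) → ℝ) : Prop :=
  ¬ ∃ x : Fin n → ℝ, (∀ i, 0 ≤ x i) ∧ x ≠ 0 ∧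
      (∀ i, 0 < x i → Axm1 A x i = 0) ∧ (∀ j, x j = 0 → 0 ≤ Axm1 A x j)

/-- Semi-positive tensor. -/
def SemiPositive {m n : ℕ} (A : (Fin (m + 2) → Fin n) → ℝ) : Prop :=
  ∀ x : Fin n → ℝ, (∀ i, 0 ≤ x i) → x ≠ 0 → ∃ k, 0 < x k ∧ 0 ≤ Axm1 A x k

/-- Strictly semi-positive tensor. -/
def StrictlySemiPositive {m n : ℕ} (A : (Fin (m + 2) → Fin n) → ℝ) : Prop :=
  ∀ x : Fin n → ℝ, (∀ i, 0 ≤ x i) → x ≠ 0 → ∃ k, 0 < x k ∧ 0 < Axm1 A x k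

/-- P-tensor. -/
def PTensor {m n : ℕ} (A : (Fin (m + 2) → Fin n) → ℝ) : Prop :=
  ∀ x : Fin n → ℝ, x ≠ 0 → ∃ i, 0 < x i * Axm1 A x i

/-- Symmetric tensor: entries invariant under permutation of indices. -/
def SymTensor {m n : ℕ} (A : (Fin (m + 2) → Fin n) → ℝ) : Prop :=
  ∀ (f : Fin (m + 2) → Fin n) (σ : Equiv.Perm (Fin (m + 2))), A (f ∘ σ) = A f

/-- Copositive tensor. -/
def Copositive {m n : ℕ} (A : (Fin (m + 2) → Fin n) → ℝ) : Prop :=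
  ∀ x : Fin n → ℝ, (∀ i, 0 ≤ x i) → 0 ≤ Axm A x

/-- Strictly copositive tensor. -/
def StrictlyCopositive {m n : ℕ} (A : (Fin (m + 2) → Fin n) → ℝ) : Prop :=
  ∀ x : Fin n → ℝ, (∀ i, 0 ≤ x i) → x ≠ 0 → 0 < Axm A x


open Metric Set MeasureTheory Filter Topology Polynomial

set_option maxHeartbeats 1000000

noncomputable section BrouwerMilnor

variable {n : ℕ}

local notation "E" => EuclideanSpace ℝ (Fin n)

def bdd (f : E → E) (x : E) : E := x - f x

def baa (f : E → E) (x : E) : ℝ := inner (𝕜 := ℝ) x (bdd f x)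

def bbb (f : E → E) (x : E) : ℝ := inner (𝕜 := ℝ) (bdd f x) (bdd f x)

def brad (f : E → E) (x : E) : ℝ := baa f x ^ 2 + bbb f x * (1 - inner (𝕜 := ℝ) x x)

def blam (f : E → E) (x : E) : ℝ := (-baa f x + Real.sqrt (brad f x)) / bbb f x

def bh (f : E → E) (x : E) : E := blam f x • bdd f x

def bret (f : E → E) (x : E) : E := x + bh f x

def bU (f : E → E) : Set (EuclideanSpace ℝ (Fin n)) := {x | bdd f x ≠ 0 ∧ 0 < brad f x}

theorem bdd_ne_zero {f : E → E} {x : E} (hne : f x ≠ x) : bdd f x ≠ 0 := by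
  simp only [bdd, ne_eq, sub_eq_zero]
  exact fun h => hne h.symm

theorem bbb_pos {f : E → E} {x : E} (h : bdd f x ≠ 0) : 0 < bbb f x := by
  unfold bbb
  rw [real_inner_self_eq_norm_sq]
  have := norm_pos_iff.mpr h
  positivity

theorem baa_pos_sphere {f : E → E} {x : E} (hx : ‖x‖ = 1) (hfx : ‖f x‖ ≤ 1)
    (hne : f x ≠ x) : 0 < baa f x := by
  by_contra hle
  push_neg at hle
  have hxx : inner (𝕜 := ℝ) x x = 1 := by rw [real_inner_self_eq_norm_sq, hx]; norm_num
  have hb : baa f x = 1 - inner (𝕜 := ℝ) x (f x) := by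
    unfold baa bdd
    rw [inner_sub_right, hxx]
  have h1 : (1 : ℝ) ≤ inner (𝕜 := ℝ) x (f x) := by rw [hb] at hle; linarith
  have h2 : ‖x - f x‖ ^ 2 ≤ 0 := by
    have hsq := norm_sub_sq_real x (f x)
    have hf2 : ‖f x‖ ^ 2 ≤ 1 := by nlinarith [norm_nonneg (f x)]
    rw [hsq, hx]
    nlinarith
  have h3 : x - f x = 0 := by
    have h4 := sq_nonneg ‖x - f x‖
    have hn : ‖x - f x‖ = 0 := by nlinarith
    simpa using hn
  exact hne (sub_eq_zero.mp h3).symm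

theorem mem_bU {f : E → E} {x : E} (hx : ‖x‖ ≤ 1) (hfx : ‖f x‖ ≤ 1) (hne : f x ≠ x) :
    x ∈ bU f := by
  refine ⟨bdd_ne_zero hne, ?_⟩
  rcases lt_or_eq_of_le hx with hlt | heq
  · have hb : 0 < bbb f x := bbb_pos (bdd_ne_zero hne)
    have hc : 0 < 1 - inner (𝕜 := ℝ) x x := by
      rw [real_inner_self_eq_norm_sq]
      nlinarith [norm_nonneg x]
    have := sq_nonneg (baa f x)
    unfold brad
    nlinarith
  · have ha := baa_pos_sphere heq hfx hne
    have hc : (1 : ℝ) - inner (𝕜 := ℝ) x x = 0 := by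
      rw [real_inner_self_eq_norm_sq, heq]; ring
    unfold brad
    rw [hc, mul_zero, add_zero]
    positivity

theorem bU_open {f : E → E} (hf : Continuous f) : IsOpen (bU f) := by
  have hdd : Continuous (bdd f) := continuous_id.sub hf
  have haa : Continuous (baa f) := continuous_id.inner hdd
  have hbb : Continuous (bbb f) := hdd.inner hdd
  have hrad : Continuous (brad f) := by
    unfold brad
    exact ((haa.pow 2).add (hbb.mul (continuous_const.sub (continuous_id.inner continuous_id))))
  exact (isOpen_compl_singleton.preimage hdd).inter (isOpen_lt continuous_const hrad)

theorem contDiffOn_bh {f : E → E} (hf : ContDiff ℝ 1 f) :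
    ContDiffOn ℝ 1 (bh f) (bU f) := by
  intro x hx
  have hdd : ContDiff ℝ 1 (bdd f) := contDiff_id.sub hf
  have haa : ContDiff ℝ 1 (baa f) := ContDiff.inner ℝ contDiff_id hdd
  have hbb : ContDiff ℝ 1 (bbb f) := ContDiff.inner ℝ hdd hdd
  have hrad : ContDiff ℝ 1 (brad f) :=
    ((haa.pow 2).add (hbb.mul (contDiff_const.sub (ContDiff.inner ℝ contDiff_id contDiff_id))))
  have hb0 : bbb f x ≠ 0 := ne_of_gt (bbb_pos hx.1)
  have hsq : ContDiffAt ℝ 1 (fun y => Real.sqrt (brad f y)) x :=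
    (Real.contDiffAt_sqrt (ne_of_gt hx.2)).comp x hrad.contDiffAt
  have hlam : ContDiffAt ℝ 1 (blam f) x := by
    unfold blam
    exact (((haa.contDiffAt).neg.add hsq).div hbb.contDiffAt hb0)
  exact ((hlam.smul hdd.contDiffAt).contDiffWithinAt)

theorem norm_bret {f : E → E} {x : E} (hx : x ∈ bU f) : ‖bret f x‖ = 1 := by
  have hb0 : 0 < bbb f x := bbb_pos hx.1
  have hrad0 : 0 ≤ brad f x := le_of_lt hx.2
  have hs : Real.sqrt (brad f x) ^ 2 = brad f x := Real.sq_sqrt hrad0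
  have key : ‖bret f x‖ ^ 2 = 1 := by
    have e1 : inner (𝕜 := ℝ) (bdd f x) x = baa f x := real_inner_comm _ _
    have hexp : ‖bret f x‖ ^ 2
        = inner (𝕜 := ℝ) x x + 2 * blam f x * baa f x + blam f x ^ 2 * bbb f x := by
      unfold bret bh
      rw [← real_inner_self_eq_norm_sq]
      rw [inner_add_add_self]
      simp only [real_inner_smul_left, real_inner_smul_right, e1]
      unfold baa bbb
      ring
    have hquad : blam f x ^ 2 * bbb f x + 2 * blam f x * baa f x
        = 1 - inner (𝕜 := ℝ) x x := by
      set a := baa f x with ha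
      set b := bbb f x with hbdef
      set c := inner (𝕜 := ℝ) x x with hc
      set s := Real.sqrt (brad f x) with hsdef
      have hs' : s ^ 2 = a ^ 2 + b * (1 - c) := by rw [hs]; rfl
      unfold blam
      rw [← ha, ← hbdef, ← hsdef]
      field_simp
      nlinarith [hs']
    rw [hexp]; linarith
  have h0 : 0 ≤ ‖bret f x‖ := norm_nonneg _
  nlinarith [key]

theorem bh_sphere {f : E → E} {x : E} (hx : ‖x‖ = 1) (hfx : ‖f x‖ ≤ 1) (hne : f x ≠ x) :
    bh f x = 0 := by
  have ha := baa_pos_sphere hx hfx hne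
  have hc : (1 : ℝ) - inner (𝕜 := ℝ) x x = 0 := by
    rw [real_inner_self_eq_norm_sq, hx]; ring
  have hrad : brad f x = baa f x ^ 2 := by unfold brad; rw [hc]; ring
  have hlam : blam f x = 0 := by
    unfold blam
    rw [hrad, Real.sqrt_sq ha.le]
    simp
  simp [bh, hlam]
theorem det_unit_ne_zero {F : Type*} [NormedAddCommGroup F] [NormedSpace ℝ F]
    (u : (F →L[ℝ] F)ˣ) : ((u : F →L[ℝ] F)).det ≠ 0 := by
  have hcoe : (((u : F →L[ℝ] F) : F →ₗ[ℝ] F) ∘ₗ ((↑u⁻¹ : F →L[ℝ] F) : F →ₗ[ℝ] F))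
      = (((u * u⁻¹ : (F →L[ℝ] F)ˣ) : F →L[ℝ] F) : F →ₗ[ℝ] F) := rfl
  have hd : ((u : F →L[ℝ] F)).det * ((↑u⁻¹ : F →L[ℝ] F)).det = 1 := by
    calc ((u : F →L[ℝ] F)).det * ((↑u⁻¹ : F →L[ℝ] F)).det
        = LinearMap.det (((u : F →L[ℝ] F) : F →ₗ[ℝ] F) ∘ₗ
            ((↑u⁻¹ : F →L[ℝ] F) : F →ₗ[ℝ] F)) := (LinearMap.det_comp _ _).symm
      _ = 1 := by
          rw [hcoe, mul_inv_cancel, Units.val_one, ContinuousLinearMap.one_def,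
            ContinuousLinearMap.coe_id]
          exact LinearMap.det_id
  exact left_ne_zero_of_mul (hd ▸ one_ne_zero)

theorem det_one_add_smul_pos {F : Type*} [NormedAddCommGroup F] [NormedSpace ℝ F]
    [CompleteSpace F] (T : F →L[ℝ] F) {t : ℝ} (h0 : 0 ≤ t) (h : t * ‖T‖ < 1) :
    0 < (ContinuousLinearMap.id ℝ F + t • T).det := by
  have hker : ∀ s : ℝ, s ∈ Set.Icc 0 t →
      (ContinuousLinearMap.id ℝ F + s • T).det ≠ 0 := by
    intro s hs
    have hs1 : s * ‖T‖ < 1 := by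
      rcases eq_or_lt_of_le (norm_nonneg T) with hT | hT
      · rw [← hT] at h ⊢; linarith
      · nlinarith [hs.1, hs.2]
    have hnorm : ‖-(s • T)‖ < 1 := by
      rw [norm_neg]
      calc ‖s • T‖ = |s| * ‖T‖ := norm_smul s T
        _ = s * ‖T‖ := by rw [abs_of_nonneg hs.1]
        _ < 1 := hs1
    have hval : (↑(Units.oneSub (-(s • T)) hnorm) : F →L[ℝ] F)
        = ContinuousLinearMap.id ℝ F + s • T := by
      rw [Units.val_oneSub, sub_neg_eq_add, ContinuousLinearMap.one_def]
    have := det_unit_ne_zero (Units.oneSub (-(s • T)) hnorm)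
    rwa [hval] at this
  by_contra hle
  push_neg at hle
  have hcont : ContinuousOn (fun s : ℝ =>
      (ContinuousLinearMap.id ℝ F + s • T).det) (Set.Icc 0 t) :=
    (ContinuousLinearMap.continuous_det.comp
      (continuous_const.add (continuous_id.smul continuous_const))).continuousOn
  have h0det : (ContinuousLinearMap.id ℝ F + (0:ℝ) • T).det = 1 := by
    rw [zero_smul, add_zero]
    exact LinearMap.det_id
  have hmem : (0:ℝ) ∈ Set.Icc ((ContinuousLinearMap.id ℝ F + t • T).det)
      ((ContinuousLinearMap.id ℝ F + (0:ℝ) • T).det) :=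
    ⟨hle, by rw [h0det]; norm_num⟩
  obtain ⟨s, hs, hszero⟩ := intermediate_value_Icc' h0 hcont hmem
  exact hker s hs hszero

theorem map_nhds_of_det_ne_zero {F : Type*} [NormedAddCommGroup F] [NormedSpace ℝ F]
    [FiniteDimensional ℝ F] {φ : F → F} {x : F} {T : F →L[ℝ] F}
    (hst : HasStrictFDerivAt φ T x) (hdet : T.det ≠ 0) :
    Filter.map φ (nhds x) = nhds (φ x) := by
  have hcoe : (((LinearMap.equivOfDetNeZero (T : F →ₗ[ℝ] F) hdet).toContinuousLinearEquiv :
      F ≃L[ℝ] F) : F →L[ℝ] F) = T := by ext v; rfl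
  exact HasStrictFDerivAt.map_nhds_eq_of_equiv
    (f' := (LinearMap.equivOfDetNeZero (T : F →ₗ[ℝ] F) hdet).toContinuousLinearEquiv)
    (by rw [hcoe]; exact hst)

theorem det_one_add_smul_expand {n : ℕ} (t : ℝ) (N : Matrix (Fin n) (Fin n) ℝ) :
    (1 + t • N).det = ∑ σ : Equiv.Perm (Fin n), ∑ S ∈ (Finset.univ : Finset (Fin n)).powerset,
      ((Equiv.Perm.sign σ : ℤ) : ℝ) * (t ^ S.card * ((∏ i ∈ S, N (σ i) i)
        * ∏ i ∈ Finset.univ \ S, ((1 : Matrix (Fin n) (Fin n) ℝ) (σ i) i))) := by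
  classical
  rw [Matrix.det_apply]
  refine Finset.sum_congr rfl fun σ _ => ?_
  have hentry : ∀ i : Fin n, (1 + t • N) (σ i) i
      = t * N (σ i) i + (1 : Matrix (Fin n) (Fin n) ℝ) (σ i) i := by
    intro i
    simp only [Matrix.add_apply, Matrix.smul_apply, smul_eq_mul]
    ring
  have hprod : (∏ i : Fin n, (1 + t • N) (σ i) i)
      = ∑ S ∈ (Finset.univ : Finset (Fin n)).powerset,
        (t ^ S.card * ((∏ i ∈ S, N (σ i) i)
          * ∏ i ∈ Finset.univ \ S, (1 : Matrix (Fin n) (Fin n) ℝ) (σ i) i)) := by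
    calc (∏ i : Fin n, (1 + t • N) (σ i) i)
        = ∏ i : Fin n, (t * N (σ i) i + (1 : Matrix (Fin n) (Fin n) ℝ) (σ i) i) :=
          Finset.prod_congr rfl fun i _ => hentry i
      _ = ∑ S ∈ (Finset.univ : Finset (Fin n)).powerset,
            (∏ i ∈ S, t * N (σ i) i) * ∏ i ∈ Finset.univ \ S,
              (1 : Matrix (Fin n) (Fin n) ℝ) (σ i) i := Finset.prod_add _ _ _
      _ = _ := by
          refine Finset.sum_congr rfl fun S _ => ?_
          rw [Finset.prod_mul_distrib, Finset.prod_const]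
          ring
  rw [hprod, Finset.smul_sum]
  refine Finset.sum_congr rfl fun S _ => ?_
  rw [Units.smul_def, zsmul_eq_mul]

theorem smooth_brouwer {n : ℕ} (f : EuclideanSpace ℝ (Fin n) → EuclideanSpace ℝ (Fin n))
    (hf : ContDiff ℝ 1 f) (hmaps : ∀ x, ‖x‖ ≤ 1 → ‖f x‖ ≤ 1) :
    ∃ x, ‖x‖ ≤ 1 ∧ f x = x := by
  classical
  rcases subsingleton_or_nontrivial (EuclideanSpace ℝ (Fin n)) with hs | hnt
  · exact ⟨0, by simp, Subsingleton.elim _ _⟩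
  by_contra hcon
  push_neg at hcon
  have hfix : ∀ x, ‖x‖ ≤ 1 → f x ≠ x := fun x hx h => (hcon x hx h).elim
  set K : Set (EuclideanSpace ℝ (Fin n)) := closedBall 0 1 with hKdef
  have hUopen : IsOpen (bU f) := bU_open hf.continuous
  have hKU : K ⊆ bU f := by
    intro x hx
    rw [hKdef, mem_closedBall, dist_zero_right] at hx
    exact mem_bU hx (hmaps x hx) (hfix x hx)
  have hballK : ball (0 : EuclideanSpace ℝ (Fin n)) 1 ⊆ K := ball_subset_closedBall
  have hballU : ball (0 : EuclideanSpace ℝ (Fin n)) 1 ⊆ bU f := hballK.trans hKU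
  have hh : ContDiffOn ℝ 1 (bh f) (bU f) := contDiffOn_bh hf
  set H : EuclideanSpace ℝ (Fin n) →
      (EuclideanSpace ℝ (Fin n)) →L[ℝ] (EuclideanSpace ℝ (Fin n)) :=
    fun x => fderiv ℝ (bh f) x with hHdef
  have hHx : ∀ x ∈ bU f, HasFDerivAt (bh f) (H x) x := fun x hx =>
    ((hh.differentiableOn one_ne_zero).differentiableAt (hUopen.mem_nhds hx)).hasFDerivAt
  have hHcont : ContinuousOn H (bU f) := hh.continuousOn_fderiv_of_isOpen hUopen le_rfl
  have hKc : IsCompact K := isCompact_closedBall _ _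
  have hKne : K.Nonempty := ⟨0, by simp [hKdef]⟩
  obtain ⟨x₀, hx₀K, hx₀max⟩ := hKc.exists_isMaxOn hKne
    ((continuous_norm.comp_continuousOn (hHcont.mono hKU)) : ContinuousOn (fun x => ‖H x‖) K)
  set L : ℝ := ‖H x₀‖ with hLdef
  have hL0 : 0 ≤ L := norm_nonneg _
  have hLbound : ∀ x ∈ K, ‖H x‖ ≤ L := fun x hx => hx₀max hx
  set δ : ℝ := min (1/2) (1 / (2 * (L + 1))) with hδdef
  have hδpos : 0 < δ := lt_min (by norm_num) (by positivity)
  have hδhalf : δ ≤ 1/2 := min_le_left _ _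
  have hδL : δ * L < 1 := by
    have h1 : δ ≤ 1 / (2 * (L + 1)) := min_le_right _ _
    have h2 : δ * L ≤ (1 / (2 * (L + 1))) * L := mul_le_mul_of_nonneg_right h1 hL0
    have h3 : (1 / (2 * (L + 1))) * L < 1 := by
      rw [div_mul_eq_mul_div, div_lt_one (by positivity)]
      nlinarith
    linarith
  set g : ℝ → EuclideanSpace ℝ (Fin n) → EuclideanSpace ℝ (Fin n) :=
    fun t x => x + t • bh f x with hgdef
  have hgmaps : ∀ t : ℝ, 0 ≤ t → t ≤ 1 → ∀ x ∈ K, g t x ∈ K := by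
    intro t ht0 ht1 x hx
    have hxU : x ∈ bU f := hKU hx
    have hrepr : g t x = (1 - t) • x + t • bret f x := by
      rw [hgdef]
      simp only [bret]
      rw [smul_add, sub_smul, one_smul]
      abel
    rw [hKdef, mem_closedBall, dist_zero_right, hrepr]
    have hx1 : ‖x‖ ≤ 1 := by rw [hKdef, mem_closedBall, dist_zero_right] at hx; exact hx
    calc ‖(1 - t) • x + t • bret f x‖ ≤ ‖(1 - t) • x‖ + ‖t • bret f x‖ := norm_add_le _ _
      _ = (1 - t) * ‖x‖ + t * ‖bret f x‖ := by
          rw [norm_smul, norm_smul, Real.norm_eq_abs, Real.norm_eq_abs,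
            abs_of_nonneg (by linarith : (0:ℝ) ≤ 1 - t), abs_of_nonneg ht0]
      _ ≤ (1 - t) * 1 + t * 1 := by
          rw [norm_bret hxU]
          have h1t : (0:ℝ) ≤ 1 - t := by linarith
          nlinarith
      _ = 1 := by ring
  have hgderiv : ∀ (t : ℝ), ∀ x ∈ bU f,
      HasFDerivAt (g t)
        (ContinuousLinearMap.id ℝ (EuclideanSpace ℝ (Fin n)) + t • H x) x := by
    intro t x hx
    exact (hasFDerivAt_id x).add ((hHx x hx).const_smul t)
  have hmv : ∀ x ∈ K, ∀ y ∈ K, ‖bh f y - bh f x‖ ≤ L * ‖y - x‖ := by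
    intro x hx y hy
    exact Convex.norm_image_sub_le_of_norm_hasFDerivWithin_le
      (fun z hz => ((hHx z (hKU hz)).hasFDerivWithinAt)) (fun z hz => hLbound z hz)
      (convex_closedBall 0 1) hx hy
  have hinj : ∀ t : ℝ, 0 ≤ t → t ≤ δ → Set.InjOn (g t) K := by
    intro t ht0 htδ x hx y hy hxy
    have h1 : x - y = t • bh f y - t • bh f x := by
      have h2 : x + t • bh f x - (y + t • bh f y) = 0 := sub_eq_zero.mpr hxy
      have h3 : x - y - (t • bh f y - t • bh f x) = x + t • bh f x - (y + t • bh f y) := by abel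
      have h4 : x - y - (t • bh f y - t • bh f x) = 0 := by rw [h3, h2]
      exact sub_eq_zero.mp h4
    have h5 : ‖x - y‖ ≤ t * L * ‖x - y‖ := by
      calc ‖x - y‖ = ‖t • (bh f y - bh f x)‖ := by rw [h1, smul_sub]
        _ = t * ‖bh f y - bh f x‖ := by
            rw [norm_smul, Real.norm_eq_abs, abs_of_nonneg ht0]
        _ ≤ t * (L * ‖y - x‖) := mul_le_mul_of_nonneg_left (hmv x hx y hy) ht0
        _ = t * L * ‖x - y‖ := by rw [norm_sub_rev]; ring
    have htL : t * L < 1 := by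
      have : t * L ≤ δ * L := mul_le_mul_of_nonneg_right htδ hL0
      linarith
    have h6 : ‖x - y‖ = 0 := by nlinarith [norm_nonneg (x - y)]
    exact sub_eq_zero.mp (norm_eq_zero.mp h6)
  have hdetpos : ∀ t : ℝ, 0 ≤ t → t ≤ δ → ∀ x ∈ K,
      0 < (ContinuousLinearMap.id ℝ (EuclideanSpace ℝ (Fin n)) + t • H x).det := by
    intro t ht0 htδ x hx
    apply det_one_add_smul_pos (H x) ht0
    calc t * ‖H x‖ ≤ δ * L := by
          apply mul_le_mul htδ (hLbound x hx) (norm_nonneg _) hδpos.le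
      _ < 1 := hδL
  have hopen : ∀ t : ℝ, 0 ≤ t → t ≤ δ → ∀ y ∈ (g t '' K) ∩ ball 0 1,
      y ∈ interior (g t '' K) := by
    rintro t ht0 htδ y ⟨⟨x, hxK, hgx⟩, hyball⟩
    have hxball : x ∈ ball (0 : EuclideanSpace ℝ (Fin n)) 1 := by
      rw [mem_ball, dist_zero_right]
      have hxle : ‖x‖ ≤ 1 := by rw [hKdef, mem_closedBall, dist_zero_right] at hxK; exact hxK
      rcases lt_or_eq_of_le hxle with h | h
      · exact h
      · exfalso
        have hb0 : bh f x = 0 := bh_sphere h (hmaps x h.le) (hfix x h.le)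
        have hgid : g t x = x := by rw [hgdef]; simp [hb0]
        rw [← hgx, hgid, mem_ball, dist_zero_right, h] at hyball
        exact lt_irrefl _ hyball
    have hxU : x ∈ bU f := hballU hxball
    have hcd : ContDiffAt ℝ 1 (g t) x :=
      contDiffAt_id.add ((hh.contDiffAt (hUopen.mem_nhds hxU)).const_smul t)
    have hstrict : HasStrictFDerivAt (g t)
        (ContinuousLinearMap.id ℝ (EuclideanSpace ℝ (Fin n)) + t • H x) x := by
      have h1 := hcd.hasStrictFDerivAt one_ne_zero
      rwa [(hgderiv t x hxU).fderiv] at h1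
    have hmap := map_nhds_of_det_ne_zero hstrict (ne_of_gt (hdetpos t ht0 htδ x hxK))
    rw [mem_interior_iff_mem_nhds, ← hgx, ← hmap]
    exact Filter.mem_of_superset (Filter.image_mem_map (isOpen_ball.mem_nhds hxball))
      (Set.image_mono hballK)
  have hgcont : ∀ t : ℝ, ContinuousOn (g t) K := fun t =>
    continuousOn_id.add ((hh.continuousOn.mono hKU).const_smul t)
  have hsur : ∀ t : ℝ, 0 ≤ t → t ≤ δ → g t '' K = K := by
    intro t ht0 htδ
    have ht1 : t ≤ 1 := htδ.trans (by linarith)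
    apply Set.Subset.antisymm
    · rintro y ⟨x, hx, rfl⟩
      exact hgmaps t ht0 ht1 x hx
    · have hScomp : IsCompact (g t '' K) := hKc.image_of_continuousOn (hgcont t)
      have hSclosed : IsClosed (g t '' K) := hScomp.isClosed
      have h0K : (0 : EuclideanSpace ℝ (Fin n)) ∈ K := by simp [hKdef]
      have hg0ball : g t 0 ∈ ball (0 : EuclideanSpace ℝ (Fin n)) 1 := by
        rw [mem_ball, dist_zero_right]
        have h1 : g t 0 = t • bret f 0 := by
          rw [hgdef]
          simp only [bret, zero_add]
        rw [h1, norm_smul, Real.norm_eq_abs, abs_of_nonneg ht0, norm_bret (hKU h0K)]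
        linarith
      have hg0 : g t 0 ∈ (g t '' K) ∩ ball 0 1 := ⟨⟨0, h0K, rfl⟩, hg0ball⟩
      have hballsub : ball (0 : EuclideanSpace ℝ (Fin n)) 1 ⊆ g t '' K := by
        have hpre := (convex_ball (0 : EuclideanSpace ℝ (Fin n)) 1).isPreconnected
        have hsubu : ball (0 : EuclideanSpace ℝ (Fin n)) 1
            ⊆ interior (g t '' K) ∪ (g t '' K)ᶜ := by
          intro y hy
          by_cases hyS : y ∈ g t '' K
          · exact Or.inl (hopen t ht0 htδ y ⟨hyS, hy⟩)
          · exact Or.inr hyS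
        have hdisj : Disjoint (interior (g t '' K)) (g t '' K)ᶜ :=
          Set.disjoint_left.mpr fun a ha hca => hca (interior_subset ha)
        have hne : (ball (0 : EuclideanSpace ℝ (Fin n)) 1 ∩ interior (g t '' K)).Nonempty :=
          ⟨g t 0, hg0.2, hopen t ht0 htδ _ hg0⟩
        exact (hpre.subset_left_of_subset_union isOpen_interior hSclosed.isOpen_compl
          hdisj hsubu hne).trans interior_subset
      calc K = closure (ball (0 : EuclideanSpace ℝ (Fin n)) 1) :=
            (closure_ball 0 one_ne_zero).symm
        _ ⊆ closure (g t '' K) := closure_mono hballsub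
        _ = g t '' K := hSclosed.closure_eq
  have hsphere_id : ∀ t : ℝ, ∀ x : EuclideanSpace ℝ (Fin n), ‖x‖ = 1 → g t x = x := by
    intro t x hx
    have hb0 : bh f x = 0 := bh_sphere hx (hmaps x hx.le) (hfix x hx.le)
    rw [hgdef]; simp [hb0]
  have himgball : ∀ t : ℝ, 0 ≤ t → t ≤ δ →
      g t '' (ball 0 1) = ball (0 : EuclideanSpace ℝ (Fin n)) 1 := by
    intro t ht0 htδ
    have ht1 : t ≤ 1 := htδ.trans (by linarith)
    apply Set.Subset.antisymm
    · rintro y ⟨x, hx, rfl⟩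
      have hyK : g t x ∈ K := hgmaps t ht0 ht1 x (hballK hx)
      rw [hKdef, mem_closedBall, dist_zero_right] at hyK
      rw [mem_ball, dist_zero_right]
      rcases lt_or_eq_of_le hyK with h | h
      · exact h
      · exfalso
        have hgtxK : g t x ∈ K := by rw [hKdef, mem_closedBall, dist_zero_right]; exact h.le
        have heq2 : g t (g t x) = g t x := hsphere_id t _ h
        have hxeq : x = g t x := hinj t ht0 htδ (hballK hx) hgtxK heq2.symm
        rw [mem_ball, dist_zero_right] at hx
        rw [← hxeq] at h
        exact absurd h (ne_of_lt hx)
    · intro y hy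
      have hyK : y ∈ K := hballK hy
      rw [← hsur t ht0 htδ] at hyK
      obtain ⟨x, hxK, hgx⟩ := hyK
      have hxball : x ∈ ball (0 : EuclideanSpace ℝ (Fin n)) 1 := by
        rw [mem_ball, dist_zero_right]
        have hxle : ‖x‖ ≤ 1 := by rw [hKdef, mem_closedBall, dist_zero_right] at hxK; exact hxK
        rcases lt_or_eq_of_le hxle with h | h
        · exact h
        · exfalso
          have := hsphere_id t x h
          rw [this] at hgx
          rw [← hgx, mem_ball, dist_zero_right, h] at hy
          exact lt_irrefl _ hy
      exact ⟨x, hxball, hgx⟩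
  -- matrix entries
  set bf := EuclideanSpace.basisFun (Fin n) ℝ with hbfdef
  set M : EuclideanSpace ℝ (Fin n) → Matrix (Fin n) (Fin n) ℝ :=
    fun x => LinearMap.toMatrix bf.toBasis bf.toBasis
      ((H x : (EuclideanSpace ℝ (Fin n)) →ₗ[ℝ] (EuclideanSpace ℝ (Fin n)))) with hMdef
  have hdet_eq : ∀ (t : ℝ) (x : EuclideanSpace ℝ (Fin n)),
      (ContinuousLinearMap.id ℝ (EuclideanSpace ℝ (Fin n)) + t • H x).det
        = (1 + t • M x).det := by
    intro t x
    show LinearMap.det _ = _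
    rw [← LinearMap.det_toMatrix bf.toBasis]
    congr 1
    have hc : ((ContinuousLinearMap.id ℝ (EuclideanSpace ℝ (Fin n)) + t • H x :
          (EuclideanSpace ℝ (Fin n)) →L[ℝ] _) : (EuclideanSpace ℝ (Fin n)) →ₗ[ℝ] _)
        = LinearMap.id + t • ((H x : (EuclideanSpace ℝ (Fin n)) →ₗ[ℝ] _)) := rfl
    rw [hc, _root_.map_add, _root_.map_smul, LinearMap.toMatrix_id]
  have hMapply : ∀ (x : EuclideanSpace ℝ (Fin n)) (i j : Fin n),
      M x i j = inner (𝕜 := ℝ) (bf i) (H x (bf j)) := by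
    intro x i j
    change (LinearMap.toMatrix bf.toBasis bf.toBasis
      ((H x : (EuclideanSpace ℝ (Fin n)) →ₗ[ℝ] (EuclideanSpace ℝ (Fin n))))) i j = _
    rw [LinearMap.toMatrix_apply, OrthonormalBasis.coe_toBasis_repr_apply,
      OrthonormalBasis.repr_apply_apply, OrthonormalBasis.coe_toBasis]
    rfl
  have hMcont : ∀ i j : Fin n, ContinuousOn (fun x => M x i j) (bU f) := by
    intro i j
    have h1 : Continuous (fun T : (EuclideanSpace ℝ (Fin n)) →L[ℝ] (EuclideanSpace ℝ (Fin n)) =>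
        (inner (𝕜 := ℝ) (bf i) (T (bf j)) : ℝ)) :=
      Continuous.inner continuous_const
        (ContinuousLinearMap.apply ℝ (EuclideanSpace ℝ (Fin n)) (bf j)).continuous
    exact ((h1.comp_continuousOn hHcont).congr fun x hx => (hMapply x i j))
  have hIntS : ∀ (σ : Equiv.Perm (Fin n)) (S : Finset (Fin n)),
      IntegrableOn (fun x => ∏ i ∈ S, M x (σ i) i)
        (ball (0 : EuclideanSpace ℝ (Fin n)) 1) := by
    intro σ S
    have hcont : ContinuousOn (fun x => ∏ i ∈ S, M x (σ i) i) K :=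
      continuousOn_finset_prod S fun i _ => (hMcont (σ i) i).mono hKU
    exact (hcont.integrableOn_compact hKc).mono_set hballK
  set v : ℝ := (volume (ball (0 : EuclideanSpace ℝ (Fin n)) 1)).toReal with hvdef
  have hvpos : 0 < v :=
    ENNReal.toReal_pos (measure_ball_pos volume 0 one_pos).ne' measure_ball_lt_top.ne
  set c : Equiv.Perm (Fin n) → Finset (Fin n) → ℝ := fun σ S =>
    ((Equiv.Perm.sign σ : ℤ) : ℝ) * (∫ x in ball (0 : EuclideanSpace ℝ (Fin n)) 1,
        ∏ i ∈ S, M x (σ i) i)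
      * (∏ i ∈ Finset.univ \ S, ((1 : Matrix (Fin n) (Fin n) ℝ) (σ i) i)) with hcdef
  set p : Polynomial ℝ := ∑ σ : Equiv.Perm (Fin n),
    ∑ S ∈ (Finset.univ : Finset (Fin n)).powerset,
      Polynomial.C (c σ S) * Polynomial.X ^ S.card with hpdef
  have heval : ∀ t : ℝ,
      p.eval t = ∫ x in ball (0 : EuclideanSpace ℝ (Fin n)) 1, (1 + t • M x).det := by
    intro t
    have hint : ∀ (σ : Equiv.Perm (Fin n)) (S : Finset (Fin n)),
        Integrable (fun x => ((Equiv.Perm.sign σ : ℤ) : ℝ) *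
          (t ^ S.card * ((∏ i ∈ S, M x (σ i) i)
            * ∏ i ∈ Finset.univ \ S, ((1 : Matrix (Fin n) (Fin n) ℝ) (σ i) i))))
          (volume.restrict (ball (0 : EuclideanSpace ℝ (Fin n)) 1)) := by
      intro σ S
      have h2 : (fun x => ((Equiv.Perm.sign σ : ℤ) : ℝ) *
          (t ^ S.card * ((∏ i ∈ S, M x (σ i) i)
            * ∏ i ∈ Finset.univ \ S, ((1 : Matrix (Fin n) (Fin n) ℝ) (σ i) i))))
          = fun x => (((Equiv.Perm.sign σ : ℤ) : ℝ) * t ^ S.card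
            * ∏ i ∈ Finset.univ \ S, ((1 : Matrix (Fin n) (Fin n) ℝ) (σ i) i))
            * (∏ i ∈ S, M x (σ i) i) := by
        funext x; ring
      rw [h2]
      exact (hIntS σ S).const_mul _
    calc p.eval t = ∑ σ : Equiv.Perm (Fin n),
          ∑ S ∈ (Finset.univ : Finset (Fin n)).powerset, c σ S * t ^ S.card := by
          rw [hpdef, Polynomial.eval_finset_sum]
          refine Finset.sum_congr rfl fun σ _ => ?_
          rw [Polynomial.eval_finset_sum]
          refine Finset.sum_congr rfl fun S _ => ?_
          simp
      _ = ∑ σ : Equiv.Perm (Fin n), ∑ S ∈ (Finset.univ : Finset (Fin n)).powerset,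
            ∫ x in ball (0 : EuclideanSpace ℝ (Fin n)) 1,
              ((Equiv.Perm.sign σ : ℤ) : ℝ) * (t ^ S.card * ((∏ i ∈ S, M x (σ i) i)
                * ∏ i ∈ Finset.univ \ S, ((1 : Matrix (Fin n) (Fin n) ℝ) (σ i) i))) := by
          refine Finset.sum_congr rfl fun σ _ => Finset.sum_congr rfl fun S _ => ?_
          have h2 : ∀ x : EuclideanSpace ℝ (Fin n), ((Equiv.Perm.sign σ : ℤ) : ℝ) *
              (t ^ S.card * ((∏ i ∈ S, M x (σ i) i)
                * ∏ i ∈ Finset.univ \ S, ((1 : Matrix (Fin n) (Fin n) ℝ) (σ i) i)))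
              = (((Equiv.Perm.sign σ : ℤ) : ℝ) * t ^ S.card
                * ∏ i ∈ Finset.univ \ S, ((1 : Matrix (Fin n) (Fin n) ℝ) (σ i) i))
                * (∏ i ∈ S, M x (σ i) i) := fun x => by ring
          simp_rw [h2]
          rw [integral_const_mul]
          rw [hcdef]
          ring
      _ = ∫ x in ball (0 : EuclideanSpace ℝ (Fin n)) 1,
            ∑ σ : Equiv.Perm (Fin n), ∑ S ∈ (Finset.univ : Finset (Fin n)).powerset,
              ((Equiv.Perm.sign σ : ℤ) : ℝ) * (t ^ S.card * ((∏ i ∈ S, M x (σ i) i)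
                * ∏ i ∈ Finset.univ \ S, ((1 : Matrix (Fin n) (Fin n) ℝ) (σ i) i))) := by
          rw [MeasureTheory.integral_finset_sum _ (fun σ _ => integrable_finset_sum _
            (fun S _ => hint σ S))]
          exact Finset.sum_congr rfl fun σ _ =>
            (MeasureTheory.integral_finset_sum _ (fun S _ => hint σ S)).symm
      _ = _ := by
          refine setIntegral_congr_fun measurableSet_ball fun x _ => ?_
          exact (det_one_add_smul_expand t (M x)).symm
  have hIδ : ∀ t : ℝ, 0 ≤ t → t < δ → p.eval t = v := by
    intro t ht0 htδ
    have hfd' : ∀ x ∈ ball (0 : EuclideanSpace ℝ (Fin n)) 1,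
        HasFDerivWithinAt (g t)
          (ContinuousLinearMap.id ℝ (EuclideanSpace ℝ (Fin n)) + t • H x) (ball 0 1) x :=
      fun x hx => (hgderiv t x (hballU hx)).hasFDerivWithinAt
    have hinj' : Set.InjOn (g t) (ball (0 : EuclideanSpace ℝ (Fin n)) 1) :=
      (hinj t ht0 htδ.le).mono hballK
    have hCoV := lintegral_abs_det_fderiv_eq_addHaar_image volume measurableSet_ball hfd' hinj'
    rw [himgball t ht0 htδ.le] at hCoV
    have hdetpos' : ∀ x ∈ ball (0 : EuclideanSpace ℝ (Fin n)) 1,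
        0 < (ContinuousLinearMap.id ℝ (EuclideanSpace ℝ (Fin n)) + t • H x).det :=
      fun x hx => hdetpos t ht0 htδ.le x (hballK hx)
    have hIntdet : IntegrableOn (fun x =>
        (ContinuousLinearMap.id ℝ (EuclideanSpace ℝ (Fin n)) + t • H x).det)
        (ball (0 : EuclideanSpace ℝ (Fin n)) 1) := by
      have hcont : ContinuousOn (fun x =>
          (ContinuousLinearMap.id ℝ (EuclideanSpace ℝ (Fin n)) + t • H x).det) K :=
        ContinuousLinearMap.continuous_det.comp_continuousOn
          (continuousOn_const.add ((hHcont.mono hKU).const_smul t))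
      exact (hcont.integrableOn_compact hKc).mono_set hballK
    have hae : 0 ≤ᵐ[volume.restrict (ball (0 : EuclideanSpace ℝ (Fin n)) 1)] fun x =>
        (ContinuousLinearMap.id ℝ (EuclideanSpace ℝ (Fin n)) + t • H x).det :=
      (ae_restrict_iff' measurableSet_ball).mpr (ae_of_all _ fun x hx => (hdetpos' x hx).le)
    have hOf := MeasureTheory.ofReal_integral_eq_lintegral_ofReal hIntdet hae
    have habs : ∫⁻ x in ball (0 : EuclideanSpace ℝ (Fin n)) 1, ENNReal.ofReal
          |(ContinuousLinearMap.id ℝ (EuclideanSpace ℝ (Fin n)) + t • H x).det|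
        = ∫⁻ x in ball (0 : EuclideanSpace ℝ (Fin n)) 1, ENNReal.ofReal
          ((ContinuousLinearMap.id ℝ (EuclideanSpace ℝ (Fin n)) + t • H x).det) :=
      setLIntegral_congr_fun measurableSet_ball
        (fun x hx => by rw [abs_of_pos (hdetpos' x hx)])
    have hkey : ENNReal.ofReal (∫ x in ball (0 : EuclideanSpace ℝ (Fin n)) 1,
        (ContinuousLinearMap.id ℝ (EuclideanSpace ℝ (Fin n)) + t • H x).det)
        = volume (ball (0 : EuclideanSpace ℝ (Fin n)) 1) := by
      rw [hOf, ← habs, hCoV]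
    have hnonneg : 0 ≤ ∫ x in ball (0 : EuclideanSpace ℝ (Fin n)) 1,
        (ContinuousLinearMap.id ℝ (EuclideanSpace ℝ (Fin n)) + t • H x).det :=
      setIntegral_nonneg measurableSet_ball fun x hx => (hdetpos' x hx).le
    have hval : (∫ x in ball (0 : EuclideanSpace ℝ (Fin n)) 1,
        (ContinuousLinearMap.id ℝ (EuclideanSpace ℝ (Fin n)) + t • H x).det) = v := by
      rw [hvdef, ← hkey, ENNReal.toReal_ofReal hnonneg]
    rw [heval t, ← hval]
    exact setIntegral_congr_fun measurableSet_ball fun x _ => (hdet_eq t x).symm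
  have hpC : p = Polynomial.C v := by
    apply Polynomial.eq_of_infinite_eval_eq
    apply Set.Infinite.mono ?_ (Set.Ico_infinite hδpos)
    intro t ht
    simp only [Set.mem_setOf_eq, Polynomial.eval_C]
    exact hIδ t ht.1 ht.2
  have hdet1 : ∀ x ∈ ball (0 : EuclideanSpace ℝ (Fin n)) 1,
      (ContinuousLinearMap.id ℝ (EuclideanSpace ℝ (Fin n)) + (1:ℝ) • H x).det = 0 := by
    intro x hx
    by_contra hne
    have hxU : x ∈ bU f := hballU hx
    have hcd : ContDiffAt ℝ 1 (g 1) x :=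
      contDiffAt_id.add ((hh.contDiffAt (hUopen.mem_nhds hxU)).const_smul 1)
    have hstrict : HasStrictFDerivAt (g 1)
        (ContinuousLinearMap.id ℝ (EuclideanSpace ℝ (Fin n)) + (1:ℝ) • H x) x := by
      have h1 := hcd.hasStrictFDerivAt one_ne_zero
      rwa [(hgderiv 1 x hxU).fderiv] at h1
    have hmap := map_nhds_of_det_ne_zero hstrict hne
    have hsphere_mem : sphere (0 : EuclideanSpace ℝ (Fin n)) 1 ∈ nhds (g 1 x) := by
      rw [← hmap]
      apply Filter.mem_of_superset (Filter.image_mem_map (hUopen.mem_nhds hxU))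
      rintro y ⟨z, hz, rfl⟩
      have h1 : g 1 z = bret f z := by
        rw [hgdef]
        simp only [bret, one_smul]
      rw [mem_sphere, dist_zero_right, h1]
      exact norm_bret hz
    obtain ⟨O, hOsub, hOopen, hyO⟩ := _root_.mem_nhds_iff.mp hsphere_mem
    have h1 : (0 : ENNReal) < volume O := hOopen.measure_pos volume ⟨_, hyO⟩
    have h2 : volume O ≤ volume (sphere (0 : EuclideanSpace ℝ (Fin n)) 1) :=
      measure_mono hOsub
    rw [MeasureTheory.Measure.addHaar_sphere volume 0 1] at h2
    exact absurd (le_antisymm h2 zero_le) (ne_of_gt h1)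
  have hp1 : p.eval 1 = 0 := by
    rw [heval 1]
    rw [show (0:ℝ) = ∫ x in ball (0 : EuclideanSpace ℝ (Fin n)) 1, (0:ℝ) by
      rw [integral_zero]]
    refine setIntegral_congr_fun measurableSet_ball fun x hx => ?_
    rw [← hdet_eq 1 x]
    exact hdet1 x hx
  rw [hpC, Polynomial.eval_C] at hp1
  exact absurd hp1 (ne_of_gt hvpos)

end BrouwerMilnor

section TCPPipeline

noncomputable def srelu (ε s : ℝ) : ℝ := (s + Real.sqrt (s ^ 2 + ε ^ 2)) / 2

noncomputable def dclamp (ε R s : ℝ) : ℝ := R - srelu ε (R - srelu ε s)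

theorem srelu_ge (ε s : ℝ) : max s 0 ≤ srelu ε s := by
  have h1 : |s| ≤ Real.sqrt (s ^ 2 + ε ^ 2) := by
    rw [← Real.sqrt_sq_eq_abs]
    exact Real.sqrt_le_sqrt (by nlinarith [sq_nonneg ε])
  have h3 := le_abs_self s
  have h4 := neg_abs_le s
  unfold srelu
  rcases max_cases s 0 with ⟨hm, _⟩ | ⟨hm, _⟩ <;> rw [hm] <;> nlinarith

theorem srelu_le {ε : ℝ} (hε : 0 ≤ ε) (s : ℝ) : srelu ε s ≤ max s 0 + ε := by
  have h1 : Real.sqrt (s ^ 2 + ε ^ 2) ≤ |s| + ε := by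
    have h2 : s ^ 2 + ε ^ 2 ≤ (|s| + ε) ^ 2 := by
      have := abs_nonneg s
      nlinarith [sq_abs s]
    calc Real.sqrt (s ^ 2 + ε ^ 2) ≤ Real.sqrt ((|s| + ε) ^ 2) := Real.sqrt_le_sqrt h2
      _ = |s| + ε := Real.sqrt_sq (by positivity)
  have h3 := le_abs_self s
  have h4 := neg_abs_le s
  unfold srelu
  rcases max_cases s 0 with ⟨hm, hs0⟩ | ⟨hm, hs0⟩ <;> rw [hm]
  · rw [abs_of_nonneg hs0] at h1; nlinarith
  · rw [abs_of_nonpos (le_of_lt hs0)] at h1; nlinarith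

theorem contDiff_srelu {ε : ℝ} (hε : ε ≠ 0) : ContDiff ℝ 1 (srelu ε) := by
  have hsq : ContDiff ℝ 1 fun s : ℝ => Real.sqrt (s ^ 2 + ε ^ 2) := by
    rw [contDiff_iff_contDiffAt]
    intro s
    have hpos : s ^ 2 + ε ^ 2 ≠ 0 := by positivity
    exact (Real.contDiffAt_sqrt hpos).comp s
      (((contDiff_id.pow 2).add contDiff_const).contDiffAt)
  exact (contDiff_id.add hsq).div_const 2

theorem contDiff_dclamp {ε : ℝ} (hε : ε ≠ 0) (R : ℝ) : ContDiff ℝ 1 (dclamp ε R) := by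
  unfold dclamp
  exact contDiff_const.sub
    ((contDiff_srelu hε).comp (contDiff_const.sub (contDiff_srelu hε)))

theorem dclamp_bounds {ε : ℝ} (hε : 0 < ε) (R s : ℝ) :
    min (max s 0) R - ε ≤ dclamp ε R s ∧ dclamp ε R s ≤ min (max s 0) R + ε := by
  have hu1 : max s 0 ≤ srelu ε s := srelu_ge ε s
  have hu2 : srelu ε s ≤ max s 0 + ε := srelu_le hε.le s
  have hw1 : max (R - srelu ε s) 0 ≤ srelu ε (R - srelu ε s) := srelu_ge ε _
  have hw2 : srelu ε (R - srelu ε s) ≤ max (R - srelu ε s) 0 + ε := srelu_le hε.le _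
  have hmin : R - max (R - srelu ε s) 0 = min (srelu ε s) R := by
    rcases le_total (R - srelu ε s) 0 with h | h
    · rw [max_eq_right h, min_eq_right (by linarith)]; ring
    · rw [max_eq_left h, min_eq_left (by linarith)]; ring
  have hd1 : min (srelu ε s) R - ε ≤ dclamp ε R s := by
    unfold dclamp; linarith [hmin]
  have hd2 : dclamp ε R s ≤ min (srelu ε s) R := by
    unfold dclamp; linarith [hmin]
  have hlow : min (max s 0) R ≤ min (srelu ε s) R := min_le_min hu1 le_rfl
  have hhigh : min (srelu ε s) R ≤ min (max s 0) R + ε := by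
    rcases le_total (max s 0) R with h | h
    · rw [min_eq_left h]
      exact le_trans (min_le_left _ _) (by linarith)
    · rw [min_eq_right h]
      exact le_trans (min_le_right _ _) (by linarith)
  exact ⟨by linarith, by linarith⟩

theorem dclamp_le_R (ε R s : ℝ) : dclamp ε R s ≤ R := by
  have h1 : (0:ℝ) ≤ srelu ε (R - srelu ε s) :=
    le_trans (le_max_right _ 0) (srelu_ge ε _)
  unfold dclamp; linarith

theorem dclamp_fixed_w_le {ε R z w : ℝ} (hε : 0 < ε) (hfix : z = dclamp ε R (z - w))
    (hz : 2 * ε < z) : w ≤ ε := by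
  obtain ⟨h1, h2⟩ := dclamp_bounds hε R (z - w)
  rw [← hfix] at h1 h2
  have h3 : z - ε ≤ min (max (z - w) 0) R := by linarith
  have h4 : z - ε ≤ max (z - w) 0 := le_trans h3 (min_le_left _ _)
  have h5 : (0:ℝ) < max (z - w) 0 := by linarith
  have h6 : max (z - w) 0 = z - w := by
    rcases max_cases (z - w) 0 with ⟨hm, _⟩ | ⟨hm, _⟩
    · exact hm
    · rw [hm] at h5; exact absurd h5 (lt_irrefl 0)
  have h7 := min_le_left (max (z - w) 0) R
  rw [h6] at h2 h7
  linarith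

theorem dclamp_near_max {ε R s : ℝ} (hε : 0 < ε) (hsR : max s 0 ≤ R) :
    |dclamp ε R s - max s 0| ≤ ε := by
  obtain ⟨h1, h2⟩ := dclamp_bounds hε R s
  rw [min_eq_left hsR] at h1 h2
  rw [abs_le]
  constructor <;> linarith

theorem contDiff_Axm1 {m n : ℕ} (A : (Fin (m + 2) → Fin n) → ℝ) (i : Fin n) :
    ContDiff ℝ 1 (fun x : Fin n → ℝ => Axm1 A x i) := by
  unfold Axm1
  apply ContDiff.sum
  intro f _
  apply ContDiff.mul contDiff_const
  apply contDiff_prod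
  intro j _
  exact (ContinuousLinearMap.proj (R := ℝ) (φ := fun _ : Fin n => ℝ) (f j)).contDiff

theorem Axm1_smul {m n : ℕ} (A : (Fin (m + 2) → Fin n) → ℝ) (c : ℝ) (x : Fin n → ℝ)
    (i : Fin n) : Axm1 A (c • x) i = c ^ (m + 1) * Axm1 A x i := by
  unfold Axm1
  rw [Finset.mul_sum]
  refine Finset.sum_congr rfl fun f _ => ?_
  have h1 : ∏ j, (c • x) (f j) = c ^ (m + 1) * ∏ j, x (f j) := by
    simp only [Pi.smul_apply, smul_eq_mul]
    rw [Finset.prod_mul_distrib, Finset.prod_const, Finset.card_univ, Fintype.card_fin]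
  rw [h1]; ring

theorem exists_dclamp_fixed {m n : ℕ} (A : (Fin (m + 2) → Fin n) → ℝ) (q : Fin n → ℝ)
    {ε R : ℝ} (hε : 0 < ε) (hεle : ε ≤ 1) (hR : 1 ≤ R) :
    ∃ z : Fin n → ℝ, ∀ i, z i = dclamp ε R (z i - (q i + Axm1 A z i)) := by
  classical
  set Φ : (Fin n → ℝ) → (Fin n → ℝ) :=
    fun x i => dclamp ε R (x i - (q i + Axm1 A x i)) with hΦdef
  have hΦcd : ContDiff ℝ 1 Φ := by
    rw [contDiff_pi]
    intro i
    exact (contDiff_dclamp hε.ne' R).comp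
      (((ContinuousLinearMap.proj (R := ℝ) (φ := fun _ : Fin n => ℝ) i).contDiff).sub
        (contDiff_const.add (contDiff_Axm1 A i)))
  have hΦub : ∀ x i, Φ x i ≤ R := fun x i => dclamp_le_R _ _ _
  have hΦlb : ∀ x i, -1 ≤ Φ x i := by
    intro x i
    have h1 := (dclamp_bounds hε R (x i - (q i + Axm1 A x i))).1
    have h2 : (0:ℝ) ≤ min (max (x i - (q i + Axm1 A x i)) 0) R :=
      le_min (le_max_right _ 0) (by linarith)
    simp only [hΦdef]
    linarith
  set e := EuclideanSpace.equiv (Fin n) ℝ with hedef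
  set ρ : ℝ := (n + 1) * (R + 2) with hρdef
  have hρpos : 0 < ρ := by positivity
  set ψ : EuclideanSpace ℝ (Fin n) → EuclideanSpace ℝ (Fin n) :=
    fun y => ρ⁻¹ • e.symm (Φ (e (ρ • y))) with hψdef
  have hψcd : ContDiff ℝ 1 ψ :=
    (e.symm.contDiff.comp (hΦcd.comp (e.contDiff.comp
      (contDiff_id.const_smul ρ)))).const_smul ρ⁻¹
  have hψnorm : ∀ y, ‖ψ y‖ ≤ 1 := by
    intro y
    have hw : ∀ i, ‖(e.symm (Φ (e (ρ • y)))) i‖ ^ 2 ≤ (R + 2) ^ 2 := by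
      intro i
      have hval : (e.symm (Φ (e (ρ • y)))) i = Φ (e (ρ • y)) i := rfl
      rw [hval, Real.norm_eq_abs]
      have h1 := hΦub (e (ρ • y)) i
      have h2 := hΦlb (e (ρ • y)) i
      have habs : |Φ (e (ρ • y)) i| ≤ R + 2 := abs_le.mpr ⟨by linarith, by linarith⟩
      have habs0 := abs_nonneg (Φ (e (ρ • y)) i)
      apply sq_le_sq'
      · linarith
      · exact habs
    have hsum : (∑ i, ‖(e.symm (Φ (e (ρ • y)))) i‖ ^ 2) ≤ (n : ℝ) * (R + 2) ^ 2 := by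
      calc (∑ i, ‖(e.symm (Φ (e (ρ • y)))) i‖ ^ 2)
          ≤ ∑ _i : Fin n, (R + 2) ^ 2 := Finset.sum_le_sum fun i _ => hw i
        _ = (n : ℝ) * (R + 2) ^ 2 := by
            rw [Finset.sum_const, Finset.card_univ, Fintype.card_fin, nsmul_eq_mul]
    have hnormval : ‖e.symm (Φ (e (ρ • y)))‖ ≤ ρ := by
      rw [EuclideanSpace.norm_eq]
      calc Real.sqrt (∑ i, ‖(e.symm (Φ (e (ρ • y)))) i‖ ^ 2)
          ≤ Real.sqrt (ρ ^ 2) := by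
            apply Real.sqrt_le_sqrt
            calc (∑ i, ‖(e.symm (Φ (e (ρ • y)))) i‖ ^ 2) ≤ (n : ℝ) * (R + 2) ^ 2 := hsum
              _ ≤ ρ ^ 2 := by
                  rw [hρdef]
                  have hn : (0:ℝ) ≤ (n:ℝ) := Nat.cast_nonneg n
                  nlinarith
        _ = ρ := Real.sqrt_sq hρpos.le
    rw [hψdef]
    simp only [norm_smul, Real.norm_eq_abs, abs_of_pos (inv_pos.mpr hρpos)]
    calc ρ⁻¹ * ‖e.symm (Φ (e (ρ • y)))‖ ≤ ρ⁻¹ * ρ := by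
          apply mul_le_mul_of_nonneg_left hnormval (inv_pos.mpr hρpos).le
      _ = 1 := inv_mul_cancel₀ hρpos.ne'
  obtain ⟨yy, hyynorm, hyfix⟩ := smooth_brouwer ψ hψcd fun x _ => hψnorm x
  refine ⟨e (ρ • yy), fun i => ?_⟩
  have h1 : e.symm (Φ (e (ρ • yy))) = ρ • yy := by
    have h2 := congrArg (fun v => ρ • v) hyfix
    simpa [hψdef, smul_smul, mul_inv_cancel₀ hρpos.ne'] using h2
  have h3 : Φ (e (ρ • yy)) = e (ρ • yy) := by
    have := congrArg e h1
    rwa [ContinuousLinearEquiv.apply_symm_apply] at this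
  exact (congrFun h3 i).symm

end TCPPipeline

section MainSSP

open Filter Topology

theorem ssp_qtensor {m n : ℕ} (A : (Fin (m + 2) → Fin n) → ℝ)
    (hA : StrictlySemiPositive A) : QTensor A := by
  intro q
  rcases Nat.eq_zero_or_pos n with hn0 | hnpos
  · subst hn0
    exact ⟨fun _ => 0, fun i => i.elim0, fun i => i.elim0, by simp⟩
  haveI : Nonempty (Fin n) := ⟨⟨0, hnpos⟩⟩
  classical
  set ε : ℕ → ℝ := fun k => 1 / ((k : ℝ) + 1) with hεdef
  have hεpos : ∀ k, 0 < ε k := fun k => by positivity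
  have hεle : ∀ k, ε k ≤ 1 := by
    intro k
    rw [hεdef]
    rw [div_le_one (by positivity)]
    linarith [Nat.cast_nonneg (α := ℝ) k]
  have hεto : Tendsto ε atTop (𝓝 0) := tendsto_one_div_add_atTop_nhds_zero_nat
  have hex : ∀ k : ℕ, ∃ z : Fin n → ℝ,
      ∀ i, z i = dclamp (ε k) ((k : ℝ) + 1) (z i - (q i + Axm1 A z i)) := by
    intro k
    exact exists_dclamp_fixed A q (hεpos k) (hεle k)
      (by linarith [Nat.cast_nonneg (α := ℝ) k])
  choose z hz using hex
  have hzlb : ∀ k i, -(ε k) ≤ z k i := by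
    intro k i
    have h1 := (dclamp_bounds (hεpos k) ((k : ℝ) + 1) (z k i - (q i + Axm1 A (z k) i))).1
    rw [← hz k i] at h1
    have h2 : (0:ℝ) ≤ min (max (z k i - (q i + Axm1 A (z k) i)) 0) ((k : ℝ) + 1) :=
      le_min (le_max_right _ 0) (by positivity)
    linarith
  set w : ℕ → Fin n → ℝ := fun k i => q i + Axm1 A (z k) i with hwdef
  set Mx : ℕ → ℝ := fun k => Finset.univ.sup' Finset.univ_nonempty (z k) with hMdef
  have hMxub : ∀ k i, z k i ≤ Mx k := fun k i => Finset.le_sup' (z k) (Finset.mem_univ i)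
  have hMxmem : ∀ k, ∃ i, Mx k = z k i := by
    intro k
    obtain ⟨i, _, hi⟩ := Finset.exists_mem_eq_sup' Finset.univ_nonempty (z k)
    exact ⟨i, hi⟩
  by_cases hT : Tendsto Mx atTop atTop
  · -- unbounded case: contradiction with strict semi-positivity
    exfalso
    obtain ⟨K₀, hK₀⟩ := Filter.eventually_atTop.mp (hT.eventually_ge_atTop 1)
    have hM1 : ∀ j : ℕ, 1 ≤ Mx (j + K₀) := fun j => hK₀ _ (Nat.le_add_left _ _)
    have hMpos : ∀ j : ℕ, 0 < Mx (j + K₀) := fun j => lt_of_lt_of_le one_pos (hM1 j)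
    set Y : ℕ → Fin n → ℝ := fun j => (Mx (j + K₀))⁻¹ • z (j + K₀) with hYdef
    have hYmem : ∀ j, Y j ∈ Set.pi Set.univ (fun _ : Fin n => Set.Icc (-1:ℝ) 1) := by
      intro j
      rw [Set.mem_univ_pi]
      intro i
      have h1 := hzlb (j + K₀) i
      have h2 := hεle (j + K₀)
      have h3 := hM1 j
      have h4 := hMpos j
      have h5 := hMxub (j + K₀) i
      have hMM : Mx (j + K₀) * (Mx (j + K₀))⁻¹ = 1 := mul_inv_cancel₀ h4.ne'
      have hinvpos : 0 < (Mx (j + K₀))⁻¹ := inv_pos.mpr h4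
      constructor
      · show -1 ≤ (Mx (j + K₀))⁻¹ * z (j + K₀) i
        nlinarith
      · show (Mx (j + K₀))⁻¹ * z (j + K₀) i ≤ 1
        nlinarith
    obtain ⟨yLim, hyLimmem, φ, hφmono, hconv⟩ :=
      (isCompact_univ_pi fun _ : Fin n => isCompact_Icc).tendsto_subseq hYmem
    have hconv' : ∀ i, Tendsto (fun l => Y (φ l) i) atTop (𝓝 (yLim i)) :=
      fun i => tendsto_pi_nhds.mp hconv i
    have hφtop : Tendsto (fun l => φ l + K₀) atTop atTop :=
      (tendsto_add_atTop_nat K₀).comp hφmono.tendsto_atTop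
    have hMtop : Tendsto (fun l => Mx (φ l + K₀)) atTop atTop := hT.comp hφtop
    have hy0 : ∀ i, 0 ≤ yLim i := by
      intro i
      have hlow : ∀ l, -(ε (φ l + K₀)) ≤ Y (φ l) i := by
        intro l
        have h1 := hzlb (φ l + K₀) i
        have h4 := hMpos (φ l)
        have hεp := hεpos (φ l + K₀)
        have hMM : Mx (φ l + K₀) * (Mx (φ l + K₀))⁻¹ = 1 := mul_inv_cancel₀ h4.ne'
        have hinvpos : 0 < (Mx (φ l + K₀))⁻¹ := inv_pos.mpr h4
        have h3 := hM1 (φ l)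
        show -(ε (φ l + K₀)) ≤ (Mx (φ l + K₀))⁻¹ * z (φ l + K₀) i
        nlinarith
      have hneg : Tendsto (fun l => -(ε (φ l + K₀))) atTop (𝓝 0) := by
        have := (hεto.comp hφtop).neg
        rwa [neg_zero] at this
      exact le_of_tendsto_of_tendsto' hneg (hconv' i) hlow
    have hIdx : ∀ j : ℕ, ∃ i, Y j i = 1 := by
      intro j
      obtain ⟨i, hi⟩ := hMxmem (j + K₀)
      refine ⟨i, ?_⟩
      show (Mx (j + K₀))⁻¹ * z (j + K₀) i = 1
      rw [← hi, inv_mul_cancel₀ (hMpos j).ne']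
    choose I hI using hIdx
    obtain ⟨i₀, hi₀⟩ := Finite.exists_infinite_fiber fun l => I (φ l)
    have hfreq : ∃ᶠ l in atTop, Y (φ l) i₀ = 1 := by
      rw [Nat.frequently_atTop_iff_infinite]
      apply Set.Infinite.mono ?_ (Set.infinite_coe_iff.mp hi₀)
      intro l hl
      have hl' : I (φ l) = i₀ := hl
      have := hI (φ l)
      rw [hl'] at this
      exact this
    have hy1 : yLim i₀ = 1 :=
      tendsto_nhds_unique_of_frequently_eq (hconv' i₀) tendsto_const_nhds hfreq
    have hyne : yLim ≠ 0 := by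
      intro h
      rw [h] at hy1
      simpa using hy1
    obtain ⟨kk, hkkpos, hkkF⟩ := hA yLim hy0 hyne
    have hev1 : ∀ᶠ l in atTop, yLim kk / 2 < Y (φ l) kk :=
      (hconv' kk).eventually_const_lt (by linarith)
    have hev2 : ∀ᶠ l in atTop, 4 / yLim kk < Mx (φ l + K₀) :=
      hMtop.eventually_gt_atTop _
    have hkey : ∀ᶠ l in atTop,
        Axm1 A (Y (φ l)) kk ≤ (Mx (φ l + K₀))⁻¹ ^ (m + 1) * (1 + |q kk|) := by
      filter_upwards [hev1, hev2] with l h1 h2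
      have hMp := hMpos (φ l)
      have hεp := hεpos (φ l + K₀)
      have hε1 := hεle (φ l + K₀)
      have hzkk : 2 * ε (φ l + K₀) < z (φ l + K₀) kk := by
        have hstep1 : Mx (φ l + K₀) * (yLim kk / 2)
            < Mx (φ l + K₀) * ((Mx (φ l + K₀))⁻¹ * z (φ l + K₀) kk) :=
          mul_lt_mul_of_pos_left h1 hMp
        have hstep2 : Mx (φ l + K₀) * ((Mx (φ l + K₀))⁻¹ * z (φ l + K₀) kk)
            = z (φ l + K₀) kk := by
          field_simp
        have hstep3 : (2:ℝ) < Mx (φ l + K₀) * (yLim kk / 2) := by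
          have h4 : (4 / yLim kk) * (yLim kk / 2) = 2 := by field_simp; ring
          calc (2:ℝ) = (4 / yLim kk) * (yLim kk / 2) := h4.symm
            _ < Mx (φ l + K₀) * (yLim kk / 2) :=
                mul_lt_mul_of_pos_right h2 (by linarith)
        rw [hstep2] at hstep1
        linarith
      have hfix : z (φ l + K₀) kk = dclamp (ε (φ l + K₀)) ((φ l + K₀ : ℕ) + 1)
          (z (φ l + K₀) kk - w (φ l + K₀) kk) := hz (φ l + K₀) kk
      have hwle : w (φ l + K₀) kk ≤ ε (φ l + K₀) := dclamp_fixed_w_le hεp hfix hzkk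
      have hhom : Axm1 A (Y (φ l)) kk
          = ((Mx (φ l + K₀))⁻¹) ^ (m + 1) * Axm1 A (z (φ l + K₀)) kk :=
        Axm1_smul A _ _ kk
      rw [hhom]
      have hF : Axm1 A (z (φ l + K₀)) kk ≤ 1 + |q kk| := by
        have hq1 := neg_abs_le (q kk)
        have hww : q kk + Axm1 A (z (φ l + K₀)) kk ≤ ε (φ l + K₀) := hwle
        linarith
      exact mul_le_mul_of_nonneg_left hF (by positivity)
    have hlim : Tendsto (fun l => (Mx (φ l + K₀))⁻¹ ^ (m + 1) * (1 + |q kk|))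
        atTop (𝓝 0) := by
      have h1 : Tendsto (fun l => (Mx (φ l + K₀))⁻¹) atTop (𝓝 0) :=
        hMtop.inv_tendsto_atTop
      have h2 : Tendsto (fun l => (Mx (φ l + K₀))⁻¹ ^ (m + 1)) atTop (𝓝 0) := by
        have h3 := h1.pow (m + 1)
        rwa [zero_pow (Nat.succ_ne_zero m)] at h3
      have h4 := h2.mul_const (1 + |q kk|)
      rwa [zero_mul] at h4
    have hFlim : Tendsto (fun l => Axm1 A (Y (φ l)) kk) atTop (𝓝 (Axm1 A yLim kk)) :=
      ((contDiff_Axm1 A kk).continuous.tendsto yLim).comp hconv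
    have hle0 : Axm1 A yLim kk ≤ 0 := le_of_tendsto_of_tendsto hFlim hlim hkey
    linarith
  · -- bounded case: extract a convergent subsequence giving an exact solution
    rw [Filter.tendsto_atTop] at hT
    obtain ⟨B, hB⟩ := not_forall.mp hT
    rw [Filter.not_eventually] at hB
    simp only [not_le] at hB
    have hSinf : {k | Mx k < B}.Infinite := Nat.frequently_atTop_iff_infinite.mp hB
    haveI := hSinf.to_subtype
    set eS := Nat.Subtype.orderIsoOfNat {k | Mx k < B} with heSdef
    set κ : ℕ → ℕ := fun l => (eS l : ℕ) with hκdef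
    have hκmono : StrictMono κ := fun a b hab => Subtype.coe_lt_coe.mpr (eS.strictMono hab)
    have hκtop : Tendsto κ atTop atTop := hκmono.tendsto_atTop
    have hκB : ∀ l, Mx (κ l) < B := fun l => (eS l).2
    set C : ℝ := max B 1 with hCdef
    have hmem : ∀ l, z (κ l) ∈ Set.pi Set.univ (fun _ : Fin n => Set.Icc (-1:ℝ) C) := by
      intro l
      rw [Set.mem_univ_pi]
      intro i
      constructor
      · have h1 := hzlb (κ l) i
        have h2 := hεle (κ l)
        linarith
      · have h1 := hMxub (κ l) i
        have h2 := hκB l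
        have h3 : B ≤ C := le_max_left _ _
        linarith
    obtain ⟨zLim, hzLimmem, φ, hφmono, hconv⟩ :=
      (isCompact_univ_pi fun _ : Fin n => isCompact_Icc).tendsto_subseq hmem
    have hconv' : ∀ i, Tendsto (fun l => z (κ (φ l)) i) atTop (𝓝 (zLim i)) :=
      fun i => tendsto_pi_nhds.mp hconv i
    set wLim : Fin n → ℝ := fun i => q i + Axm1 A zLim i with hwLimdef
    have hwconv : ∀ i, Tendsto (fun l => w (κ (φ l)) i) atTop (𝓝 (wLim i)) := by
      intro i
      have hc : Continuous fun x : Fin n → ℝ => q i + Axm1 A x i :=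
        continuous_const.add (contDiff_Axm1 A i).continuous
      exact (hc.tendsto zLim).comp hconv
    have hκφtop : Tendsto (fun l => κ (φ l)) atTop atTop := hκtop.comp hφmono.tendsto_atTop
    have hεκto : Tendsto (fun l => ε (κ (φ l))) atTop (𝓝 0) := hεto.comp hκφtop
    have hfixlim : ∀ i, zLim i = max (zLim i - wLim i) 0 := by
      intro i
      have hs : Tendsto (fun l => z (κ (φ l)) i - w (κ (φ l)) i) atTop
          (𝓝 (zLim i - wLim i)) := (hconv' i).sub (hwconv i)
      have hcast : Tendsto (fun l => ((κ (φ l) : ℝ))) atTop atTop :=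
        tendsto_natCast_atTop_atTop.comp hκφtop
      have hbound : ∀ᶠ l in atTop,
          max (z (κ (φ l)) i - w (κ (φ l)) i) 0 ≤ ((κ (φ l) : ℝ)) + 1 := by
        filter_upwards [hs.eventually_lt_const (lt_add_one (zLim i - wLim i)),
          hcast.eventually_ge_atTop (zLim i - wLim i + 1)] with l h1 h2
        apply max_le
        · linarith
        · positivity
      have hnear : ∀ᶠ l in atTop,
          |z (κ (φ l)) i - max (z (κ (φ l)) i - w (κ (φ l)) i) 0| ≤ ε (κ (φ l)) := by
        filter_upwards [hbound] with l hb
        have h1 := dclamp_near_max (hεpos (κ (φ l))) hb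
        rw [← hz (κ (φ l)) i] at h1
        exact h1
      have hmaxconv : Tendsto (fun l => max (z (κ (φ l)) i - w (κ (φ l)) i) 0) atTop
          (𝓝 (max (zLim i - wLim i) 0)) := hs.max tendsto_const_nhds
      have hdiff : Tendsto
          (fun l => z (κ (φ l)) i - max (z (κ (φ l)) i - w (κ (φ l)) i) 0) atTop (𝓝 0) := by
        apply squeeze_zero_norm' ?_ hεκto
        filter_upwards [hnear] with l h1
        exact h1
      have hsum := hmaxconv.add hdiff
      rw [add_zero] at hsum
      have heq : (fun l => max (z (κ (φ l)) i - w (κ (φ l)) i) 0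
          + (z (κ (φ l)) i - max (z (κ (φ l)) i - w (κ (φ l)) i) 0))
          = fun l => z (κ (φ l)) i := by
        funext l; ring
      rw [heq] at hsum
      exact tendsto_nhds_unique (hconv' i) hsum
    have hcompl : ∀ i, 0 ≤ zLim i ∧ 0 ≤ wLim i ∧ zLim i * wLim i = 0 := by
      intro i
      have hfx := hfixlim i
      rcases max_cases (zLim i - wLim i) 0 with ⟨hm, hge⟩ | ⟨hm, hlt⟩
      · rw [hm] at hfx
        have hw0 : wLim i = 0 := by linarith
        exact ⟨by linarith, hw0.ge, by rw [hw0, mul_zero]⟩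
      · rw [hm] at hfx
        refine ⟨hfx.ge, ?_, by rw [hfx, zero_mul]⟩
        rw [hfx] at hlt
        linarith
    refine ⟨zLim, fun i => (hcompl i).1, fun i => (hcompl i).2.1, ?_⟩
    apply Finset.sum_eq_zero
    intro i _
    exact (hcompl i).2.2

end MainSSP

theorem stmt6 {m n : ℕ} (A : (Fin (m + 2) → Fin n) → ℝ) :
    (StrictlySemiPositive A → QTensor A) ∧ (PTensor A → QTensor A) := by
  constructor
  · exact fun h => ssp_qtensor A h
  · intro hP
    apply ssp_qtensor
    intro x hx hne
    obtain ⟨i, hi⟩ := hP x hne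
    have hxi : 0 < x i := by
      rcases lt_trichotomy (x i) 0 with h | h | h
      · linarith [hx i]
      · rw [h] at hi; simpa using hi
      · exact h
    refine ⟨i, hxi, ?_⟩
    rcases mul_pos_iff.mp hi with ⟨_, h2⟩ | ⟨h1, _⟩
    · exact h2
    · linarith
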